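/- Let Σ be a type, M and N monoids, Φ : Σ* → ◊(M,N) a monoid homomorphism with components Φ(w) = (ζ(w), φ₁(w), φ₂(w)), and let V₁ ⊆ M, V₂ ⊆ N. Then {w ∈ Σ* : ζ(w) ∩ (V₁ × V₂) ≠ ∅} = ⋃_{a ∈ Σ} ⋃_{(m,n) ∈ ζ(a)} A_m · a · B_n, where A_m := {u ∈ Σ* : φ₁(u)·m ∈ V₁}, B_n := {v ∈ Σ* : n·φ₂(v) ∈ V₂}, and A_m · a · B_n := {u·a·v : u ∈ A_m, v ∈ B_n}. -/
import Mathlib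


/-- The multiplication of the binary Schützenberger product `◊(M,N)` on
`Finset (M × N) × M × N`: `(S,m₁,n₁)·(T,m₂,n₂) = (m₁·T ∪ S·n₂, m₁·m₂, n₁·n₂)`. -/
def dMul2 {M N : Type*} [Monoid M] [Monoid N] [DecidableEq M] [DecidableEq N]
    (p q : Finset (M × N) × M × N) : Finset (M × N) × M × N :=
  (q.1.image (fun t => (p.2.1 * t.1, t.2)) ∪ p.1.image (fun s => (s.1, s.2 * q.2.2)),
   p.2.1 * q.2.1, p.2.2 * q.2.2)

lemma memAux {A M N : Type*} [Monoid M] [Monoid N] [DecidableEq M] [DecidableEq N]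
    (Φ : List A → Finset (M × N) × M × N)
    (hone : Φ [] = (∅, 1, 1))
    (hmul : ∀ v w : List A, Φ (v ++ w) = dMul2 (Φ v) (Φ w)) :
    ∀ w : List A, ∀ p : M × N, p ∈ (Φ w).1 ↔
      ∃ u a v, ∃ mn ∈ (Φ [a]).1,
        w = u ++ [a] ++ v ∧ p = ((Φ u).2.1 * mn.1, mn.2 * (Φ v).2.2) := by
  intro w
  induction w with
  | nil =>
    intro p
    simp only [hone]
    constructor
    · intro h; simp at h
    · rintro ⟨u, a, v, mn, _, h, _⟩
      exact absurd h (by simp)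
  | cons a w ih =>
    intro p
    have h1 : Φ (a :: w) = dMul2 (Φ [a]) (Φ w) := hmul [a] w
    constructor
    · intro hp
      rw [h1] at hp
      simp only [dMul2, Finset.mem_union, Finset.mem_image] at hp
      rcases hp with ⟨t, ht, rfl⟩ | ⟨s, hs, rfl⟩
      · rcases (ih t).1 ht with ⟨u, b, v, mn, hmn, rfl, rfl⟩
        refine ⟨a :: u, b, v, mn, hmn, rfl, ?_⟩
        have : Φ (a :: u) = dMul2 (Φ [a]) (Φ u) := hmul [a] u
        simp [this, dMul2, mul_assoc]
      · exact ⟨[], a, w, s, hs, rfl, by simp [hone]⟩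
    · rintro ⟨u, b, v, mn, hmn, he, rfl⟩
      have key : ∀ (u' : List A) (b' : A) (v' : List A), ∀ mn' ∈ (Φ [b']).1,
          ((Φ u').2.1 * mn'.1, mn'.2 * (Φ v').2.2) ∈ (Φ (u' ++ [b'] ++ v')).1 := by
        intro u' b' v' mn' hmn'
        have h2 : Φ (u' ++ [b'] ++ v') = dMul2 (Φ u') (dMul2 (Φ [b']) (Φ v')) := by
          rw [List.append_assoc, hmul, hmul]
        rw [h2]
        simp only [dMul2, Finset.mem_union, Finset.mem_image]
        left
        exact ⟨(mn'.1, mn'.2 * (Φ v').2.2), Or.inr ⟨mn', hmn', rfl⟩, rfl⟩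
      rw [he]
      exact key u b v mn hmn

/-- For a monoid homomorphism `Φ = (ζ, φ₁, φ₂) : Σ* → ◊(M,N)` and `V₁ ⊆ M`, `V₂ ⊆ N`,
`{w : ζ(w) ∩ (V₁ × V₂) ≠ ∅} = ⋃_{a ∈ Σ} ⋃_{(m,n) ∈ ζ(a)} A_m · a · B_n`, where
`A_m = {u : φ₁(u)·m ∈ V₁}` and `B_n = {v : n·φ₂(v) ∈ V₂}`. -/
theorem stmt10 {A M N : Type*} [Monoid M] [Monoid N] [DecidableEq M] [DecidableEq N]
    (Φ : List A → Finset (M × N) × M × N)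
    (hone : Φ [] = (∅, 1, 1))
    (hmul : ∀ v w : List A, Φ (v ++ w) = dMul2 (Φ v) (Φ w))
    (V₁ : Set M) (V₂ : Set N) :
    {w : List A | ∃ t ∈ (Φ w).1, t.1 ∈ V₁ ∧ t.2 ∈ V₂} =
      ⋃ (a : A) (mn : M × N) (_ : mn ∈ (Φ [a]).1),
        {w : List A | ∃ u v : List A,
          (Φ u).2.1 * mn.1 ∈ V₁ ∧ mn.2 * (Φ v).2.2 ∈ V₂ ∧ w = u ++ [a] ++ v} := by
  ext w
  simp only [Set.mem_setOf_eq, Set.mem_iUnion]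
  constructor
  · rintro ⟨t, ht, h1, h2⟩
    rcases (memAux Φ hone hmul w t).1 ht with ⟨u, a, v, mn, hmn, heq, hteq⟩
    rw [hteq] at h1 h2
    exact ⟨a, mn, hmn, u, v, h1, h2, heq⟩
  · rintro ⟨a, mn, hmn, u, v, h1, h2, rfl⟩
    refine ⟨((Φ u).2.1 * mn.1, mn.2 * (Φ v).2.2), ?_, h1, h2⟩
    exact (memAux Φ hone hmul _ _).2 ⟨u, a, v, mn, hmn, rfl, rfl⟩
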